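/- For all x ∈ ℝ^N, t > 0 and λ ∈ ℝ, the fundamental solution satisfies G_{N,λ}(x,t) = t^{-N/4} · Σ_{m=0}^∞ ((-λ)^m t^{m/2} / m!) · (-Δ_z)^m g_N(x/t^{1/4}), where g_N(z) := (2π)^{-N} ∫_{ℝ^N} e^{-|ξ|⁴ + i⟨z,ξ⟩} dξ. -/

import Mathlib

open scoped Real
open MeasureTheory

/-- The fundamental solution `G_{N,λ}(x,t)`. -/
noncomputable def Gfund (N : ℕ) (lam t : ℝ) (x : EuclideanSpace ℝ (Fin N)) : ℂ :=
  (((2 * Real.pi) ^ (-(N : ℝ)) : ℝ) : ℂ) *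
    ∫ ξ : EuclideanSpace ℝ (Fin N),
      Complex.exp (-(((‖ξ‖ ^ 4 + lam * ‖ξ‖ ^ 2) * t : ℝ) : ℂ)
        + Complex.I * ((inner ℝ x ξ : ℝ) : ℂ))

/-- The kernel `g_N(z) = (2π)^{-N} ∫ e^{-|ξ|⁴ + i⟨z,ξ⟩} dξ`. -/
noncomputable def gker (N : ℕ) (z : EuclideanSpace ℝ (Fin N)) : ℂ :=
  (((2 * Real.pi) ^ (-(N : ℝ)) : ℝ) : ℂ) *
    ∫ ξ : EuclideanSpace ℝ (Fin N),
      Complex.exp (-((‖ξ‖ ^ 4 : ℝ) : ℂ) + Complex.I * ((inner ℝ z ξ : ℝ) : ℂ))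

/-- The Laplacian of a function on `ℝ^N`, as the sum of second directional derivatives
along the coordinate directions. -/
noncomputable def lap (N : ℕ) (f : EuclideanSpace ℝ (Fin N) → ℂ)
    (x : EuclideanSpace ℝ (Fin N)) : ℂ :=
  ∑ i : Fin N, iteratedDeriv 2 (fun s : ℝ => f (x + s • EuclideanSpace.single i 1)) 0

/-- The `m`-th iterate of the negative Laplacian. -/
noncomputable def negLapIter (N : ℕ) (m : ℕ) (f : EuclideanSpace ℝ (Fin N) → ℂ) :
    EuclideanSpace ℝ (Fin N) → ℂ :=
  (fun h x => -(lap N h x))^[m] f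

/-! ### Auxiliary integrability lemmas -/

lemma integrable_gauss (N : ℕ) :
    Integrable (fun v : EuclideanSpace ℝ (Fin N) => Real.exp (-‖v‖ ^ 2)) := by
  have h := (GaussianFourier.integrable_cexp_neg_mul_sq_norm_add
    (V := EuclideanSpace ℝ (Fin N)) (b := 1) (by norm_num) 0 0).norm
  refine h.congr ?_
  filter_upwards with v
  simp only [Complex.norm_exp]
  norm_cast
  simp

lemma integrable_of_le_gauss {N : ℕ} {f : EuclideanSpace ℝ (Fin N) → ℝ} (C : ℝ)
    (hmeas : AEStronglyMeasurable f (volume : Measure (EuclideanSpace ℝ (Fin N))))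
    (hb : ∀ v, ‖f v‖ ≤ C * Real.exp (-‖v‖ ^ 2)) : Integrable f := by
  refine Integrable.mono ((integrable_gauss N).const_mul C) hmeas (ae_of_all _ fun v => ?_)
  exact (hb v).trans (le_abs_self _)

lemma pow_mul_exp_le (k : ℕ) {r : ℝ} (hr : 0 ≤ r) :
    r ^ k * Real.exp (-r ^ 4) ≤ (k.factorial : ℝ) * Real.exp 2 * Real.exp (-r ^ 2) := by
  have h1 : r ^ k ≤ k.factorial * Real.exp r := by
    have := Real.pow_div_factorial_le_exp r hr k
    have hk : (0:ℝ) < k.factorial := by exact_mod_cast k.factorial_pos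
    calc r ^ k = k.factorial * (r ^ k / k.factorial) := by field_simp
    _ ≤ k.factorial * Real.exp r := by
        exact mul_le_mul_of_nonneg_left this hk.le
  calc r ^ k * Real.exp (-r ^ 4) ≤ (k.factorial * Real.exp r) * Real.exp (-r ^ 4) :=
        mul_le_mul_of_nonneg_right h1 (Real.exp_nonneg _)
  _ = k.factorial * Real.exp (r - r ^ 4) := by rw [mul_assoc, ← Real.exp_add]; ring_nf
  _ ≤ k.factorial * Real.exp (2 - r ^ 2) := by
      have : r - r ^ 4 ≤ 2 - r ^ 2 := by nlinarith [sq_nonneg (r - 1), sq_nonneg (r ^ 2 - 1)]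
      exact mul_le_mul_of_nonneg_left (Real.exp_le_exp.2 this) (Nat.cast_nonneg _)
  _ = k.factorial * Real.exp 2 * Real.exp (-r ^ 2) := by rw [mul_assoc, ← Real.exp_add]; ring_nf

lemma exp_quad_le (b : ℝ) {r : ℝ} :
    Real.exp (b * r ^ 2 - r ^ 4) ≤ Real.exp (((b + 1) / 2) ^ 2) * Real.exp (-r ^ 2) := by
  rw [← Real.exp_add]
  refine Real.exp_le_exp.2 ?_
  nlinarith [sq_nonneg (r ^ 2 - (b + 1) / 2)]

lemma integrable_pow_exp (N k : ℕ) :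
    Integrable (fun ξ : EuclideanSpace ℝ (Fin N) => ‖ξ‖ ^ k * Real.exp (-‖ξ‖ ^ 4)) := by
  refine integrable_of_le_gauss (k.factorial * Real.exp 2) ?_ fun v => ?_
  · exact ((continuous_norm.pow k).mul
      (Real.continuous_exp.comp (continuous_norm.pow 4).neg)).aestronglyMeasurable
  · rw [Real.norm_eq_abs, _root_.abs_of_nonneg (by positivity)]
    exact pow_mul_exp_le k (norm_nonneg v)

lemma integrable_exp_quad (N : ℕ) (b : ℝ) :
    Integrable (fun ξ : EuclideanSpace ℝ (Fin N) => Real.exp (b * ‖ξ‖ ^ 2 - ‖ξ‖ ^ 4)) := by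
  refine integrable_of_le_gauss (Real.exp (((b + 1) / 2) ^ 2)) ?_ fun v => ?_
  · exact (Real.continuous_exp.comp
      ((continuous_const.mul (continuous_norm.pow 2)).sub (continuous_norm.pow 4))).aestronglyMeasurable
  · rw [Real.norm_eq_abs, _root_.abs_of_nonneg (Real.exp_nonneg _)]
    exact exp_quad_le b

/-! ### The oscillatory integral `Jint` and its derivatives -/

noncomputable def Jint (N : ℕ) (φ : EuclideanSpace ℝ (Fin N) → ℝ)
    (z : EuclideanSpace ℝ (Fin N)) : ℂ :=
  ∫ ξ : EuclideanSpace ℝ (Fin N), (φ ξ : ℂ) * Complex.exp (Complex.I * ((inner ℝ z ξ : ℝ) : ℂ))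

lemma norm_cexp_I_mul_ofReal (r : ℝ) : ‖Complex.exp (Complex.I * (r : ℂ))‖ = 1 := by
  rw [Complex.norm_exp]
  simp

lemma cont_integrand {N : ℕ} {φ : EuclideanSpace ℝ (Fin N) → ℝ} (hφc : Continuous φ)
    (z : EuclideanSpace ℝ (Fin N)) :
    Continuous fun ξ : EuclideanSpace ℝ (Fin N) =>
      (φ ξ : ℂ) * Complex.exp (Complex.I * ((inner ℝ z ξ : ℝ) : ℂ)) :=
  (Complex.continuous_ofReal.comp hφc).mul (Complex.continuous_exp.comp
    (continuous_const.mul (Complex.continuous_ofReal.comp (continuous_const.inner continuous_id))))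

lemma integrable_integrand {N : ℕ} {φ : EuclideanSpace ℝ (Fin N) → ℝ} (hφc : Continuous φ)
    (h0 : Integrable φ) (z : EuclideanSpace ℝ (Fin N)) :
    Integrable fun ξ : EuclideanSpace ℝ (Fin N) =>
      (φ ξ : ℂ) * Complex.exp (Complex.I * ((inner ℝ z ξ : ℝ) : ℂ)) := by
  refine h0.abs.mono' (cont_integrand hφc z).aestronglyMeasurable (ae_of_all _ fun ξ => ?_)
  rw [norm_mul, norm_cexp_I_mul_ofReal, mul_one, Complex.norm_real, Real.norm_eq_abs]

lemma abs_coord_le_norm {N : ℕ} (ξ : EuclideanSpace ℝ (Fin N)) (i : Fin N) : |ξ i| ≤ ‖ξ‖ := by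
  have h : ξ i = (inner ℝ (EuclideanSpace.single i (1:ℝ)) ξ : ℝ) := by
    simp [EuclideanSpace.inner_single_left]
  rw [h]
  have := abs_real_inner_le_norm (EuclideanSpace.single i (1:ℝ)) ξ
  simpa [EuclideanSpace.norm_single] using this

lemma hasDerivAt_Jint {N : ℕ} {φ : EuclideanSpace ℝ (Fin N) → ℝ} (hφc : Continuous φ)
    (hφ0 : Integrable φ) (hφ1 : Integrable fun ξ => ‖ξ‖ * |φ ξ|)
    (i : Fin N) (x : EuclideanSpace ℝ (Fin N)) (s₀ : ℝ) :
    HasDerivAt (fun s : ℝ => Jint N φ (x + s • EuclideanSpace.single i 1))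
      (Complex.I * Jint N (fun ξ => ξ i * φ ξ) (x + s₀ • EuclideanSpace.single i 1)) s₀ := by
  have hinner : ∀ (s : ℝ) (ξ : EuclideanSpace ℝ (Fin N)),
      (inner ℝ (x + s • EuclideanSpace.single i 1) ξ : ℝ) = inner ℝ x ξ + s * ξ i := fun s ξ => by
    rw [inner_add_left, real_inner_smul_left]
    simp [EuclideanSpace.inner_single_left]
  have key := hasDerivAt_integral_of_dominated_loc_of_deriv_le (μ := volume)
      (F := fun (s : ℝ) ξ => (φ ξ : ℂ) *
        Complex.exp (Complex.I * ((inner ℝ (x + s • EuclideanSpace.single i 1) ξ : ℝ) : ℂ)))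
      (F' := fun (s : ℝ) ξ => Complex.I * ((ξ i : ℝ) : ℂ) * ((φ ξ : ℂ) *
        Complex.exp (Complex.I * ((inner ℝ (x + s • EuclideanSpace.single i 1) ξ : ℝ) : ℂ))))
      (x₀ := s₀) (bound := fun ξ => ‖ξ‖ * |φ ξ|) (Metric.ball_mem_nhds s₀ one_pos)
      (Filter.Eventually.of_forall fun s => (cont_integrand hφc _).aestronglyMeasurable)
      (integrable_integrand hφc hφ0 _)
      ((continuous_const.mul (Complex.continuous_ofReal.comp
          (EuclideanSpace.proj i).continuous)).mul (cont_integrand hφc _)).aestronglyMeasurable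
      (ae_of_all _ fun ξ s _hs => ?_) hφ1 (ae_of_all _ fun ξ s _hs => ?_)
  · -- conclusion
    simp only [Jint]
    have h2 := key.2
    refine h2.congr_deriv ?_
    rw [← integral_const_mul]
    refine integral_congr_ae (ae_of_all _ fun ξ => ?_)
    push_cast
    ring
  · -- bound
    rw [norm_mul, norm_mul, norm_mul, norm_cexp_I_mul_ofReal, mul_one, Complex.norm_I, one_mul,
      Complex.norm_real, Complex.norm_real, Real.norm_eq_abs, Real.norm_eq_abs]
    exact mul_le_mul_of_nonneg_right (abs_coord_le_norm ξ i) (abs_nonneg _)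
  · -- differentiability
    have h1 : HasDerivAt (fun w : ℂ => Complex.I * ((inner ℝ x ξ : ℝ) : ℂ) +
        (Complex.I * ((ξ i : ℝ) : ℂ)) * w) (Complex.I * ((ξ i : ℝ) : ℂ)) (s : ℂ) := by
      simpa using ((hasDerivAt_id (s : ℂ)).const_mul (Complex.I * ((ξ i : ℝ) : ℂ))).const_add
        (Complex.I * ((inner ℝ x ξ : ℝ) : ℂ))
    have h3 := (h1.cexp.const_mul ((φ ξ : ℝ) : ℂ)).comp_ofReal
    have harg : ∀ u : ℝ, Complex.I * ((inner ℝ (x + u • EuclideanSpace.single i 1) ξ : ℝ) : ℂ)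
        = Complex.I * ((inner ℝ x ξ : ℝ) : ℂ) + (Complex.I * ((ξ i : ℝ) : ℂ)) * (u : ℂ) := by
      intro u
      rw [hinner u]
      push_cast
      ring
    simp only [harg]
    refine h3.congr_deriv ?_
    ring

lemma sum_sq_coord {N : ℕ} (ξ : EuclideanSpace ℝ (Fin N)) :
    ∑ i : Fin N, ξ i ^ 2 = ‖ξ‖ ^ 2 := by
  rw [EuclideanSpace.norm_eq, Real.sq_sqrt (by positivity)]
  simp [sq_abs]

lemma lap_Jint {N : ℕ} {φ : EuclideanSpace ℝ (Fin N) → ℝ} (hφc : Continuous φ)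
    (h0 : Integrable φ) (h1 : Integrable fun ξ => ‖ξ‖ * |φ ξ|)
    (h2 : Integrable fun ξ => ‖ξ‖ ^ 2 * |φ ξ|) (x : EuclideanSpace ℝ (Fin N)) :
    lap N (Jint N φ) x = - Jint N (fun ξ => ‖ξ‖ ^ 2 * φ ξ) x := by
  have hterm : ∀ i : Fin N,
      iteratedDeriv 2 (fun s : ℝ => Jint N φ (x + s • EuclideanSpace.single i 1)) 0
      = - Jint N (fun ξ => ξ i ^ 2 * φ ξ) x := by
    intro i
    have hψc : Continuous fun ξ : EuclideanSpace ℝ (Fin N) => ξ i * φ ξ :=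
      (EuclideanSpace.proj i).continuous.mul hφc
    have hψ0 : Integrable fun ξ : EuclideanSpace ℝ (Fin N) => ξ i * φ ξ := by
      refine h1.mono' hψc.aestronglyMeasurable (ae_of_all _ fun ξ => ?_)
      rw [Real.norm_eq_abs, abs_mul]
      exact mul_le_mul_of_nonneg_right (abs_coord_le_norm ξ i) (abs_nonneg _)
    have hψ1 : Integrable fun ξ : EuclideanSpace ℝ (Fin N) => ‖ξ‖ * |ξ i * φ ξ| := by
      refine h2.mono' (continuous_norm.mul hψc.abs).aestronglyMeasurable
        (ae_of_all _ fun ξ => ?_)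
      simp only [Real.norm_eq_abs, abs_mul, _root_.abs_abs, abs_norm]
      rw [pow_two, mul_assoc]
      refine mul_le_mul_of_nonneg_left ?_ (norm_nonneg _)
      exact mul_le_mul_of_nonneg_right (abs_coord_le_norm ξ i) (abs_nonneg _)
    rw [show (2 : ℕ) = 1 + 1 by rfl, iteratedDeriv_succ, iteratedDeriv_one]
    have hd : deriv (fun s : ℝ => Jint N φ (x + s • EuclideanSpace.single i 1))
        = fun s : ℝ => Complex.I * Jint N (fun ξ => ξ i * φ ξ)
            (x + s • EuclideanSpace.single i 1) := by
      funext s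
      exact (hasDerivAt_Jint hφc h0 h1 i x s).deriv
    rw [hd]
    have h4 := ((hasDerivAt_Jint hψc hψ0 hψ1 i x 0).const_mul Complex.I).deriv
    rw [h4]
    have hz : x + (0:ℝ) • EuclideanSpace.single i (1:ℝ) = x := by simp
    rw [hz]
    have hJ : Jint N (fun ξ => ξ i * (ξ i * φ ξ)) x = Jint N (fun ξ => ξ i ^ 2 * φ ξ) x := by
      congr 1
      funext ξ
      ring
    rw [hJ, ← mul_assoc, Complex.I_mul_I, neg_one_mul]
  unfold lap
  rw [Finset.sum_congr rfl fun i _ => hterm i, Finset.sum_neg_distrib]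
  congr 1
  unfold Jint
  rw [← integral_finset_sum]
  · refine integral_congr_ae (ae_of_all _ fun ξ => ?_)
    simp only
    rw [← Finset.sum_mul]
    congr 1
    rw [← sum_sq_coord ξ, Finset.sum_mul]
    push_cast
    rfl
  · intro i _
    have hci : Continuous fun ξ : EuclideanSpace ℝ (Fin N) => ξ i ^ 2 * φ ξ :=
      ((EuclideanSpace.proj i).continuous.pow 2).mul hφc
    refine integrable_integrand hci ?_ x
    refine h2.mono' hci.aestronglyMeasurable (ae_of_all _ fun ξ => ?_)
    rw [Real.norm_eq_abs, abs_mul, abs_pow]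
    exact mul_le_mul_of_nonneg_right
      (pow_le_pow_left₀ (abs_nonneg _) (abs_coord_le_norm ξ i) 2) (abs_nonneg _)

/-! ### The weights and identification of the iterated Laplacian -/

noncomputable def phiW (N m : ℕ) : EuclideanSpace ℝ (Fin N) → ℝ := fun ξ =>
  (2 * Real.pi) ^ (-(N : ℝ)) * (‖ξ‖ ^ (2 * m) * Real.exp (-‖ξ‖ ^ 4))

lemma phiW_nonneg (N m : ℕ) (ξ : EuclideanSpace ℝ (Fin N)) : 0 ≤ phiW N m ξ := by
  unfold phiW
  have h2 : (0:ℝ) < 2 * Real.pi := by positivity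
  positivity

lemma phiW_cont (N m : ℕ) : Continuous (phiW N m) :=
  continuous_const.mul ((continuous_norm.pow _).mul
    (Real.continuous_exp.comp (continuous_norm.pow 4).neg))

lemma integrable_pow_mul_phiW (N m k : ℕ) :
    Integrable fun ξ : EuclideanSpace ℝ (Fin N) => ‖ξ‖ ^ k * |phiW N m ξ| := by
  have h := (integrable_pow_exp N (2 * m + k)).const_mul ((2 * Real.pi) ^ (-(N:ℝ)))
  refine h.congr (ae_of_all _ fun ξ => ?_)
  simp only
  rw [_root_.abs_of_nonneg (phiW_nonneg N m ξ)]
  unfold phiW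
  rw [pow_add]
  ring

lemma integrable_phiW (N m : ℕ) : Integrable (phiW N m) := by
  have h := integrable_pow_mul_phiW N m 0
  simp only [pow_zero, one_mul] at h
  exact h.mono' (phiW_cont N m).aestronglyMeasurable
    (ae_of_all _ fun ξ => le_of_eq (Real.norm_eq_abs _))

lemma gker_eq (N : ℕ) : gker N = Jint N (phiW N 0) := by
  funext z
  unfold gker Jint
  rw [← integral_const_mul]
  refine integral_congr_ae (ae_of_all _ fun ξ => ?_)
  simp only
  have hφ : ((phiW N 0 ξ : ℝ) : ℂ)
      = (((2 * Real.pi) ^ (-(N:ℝ)) : ℝ) : ℂ) * Complex.exp (-((‖ξ‖ ^ 4 : ℝ) : ℂ)) := by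
    unfold phiW
    rw [Complex.ofReal_mul, Complex.ofReal_mul, Complex.ofReal_exp]
    push_cast
    norm_num
  rw [hφ, Complex.exp_add]
  ring

lemma negLapIter_gker (N m : ℕ) : negLapIter N m (gker N) = Jint N (phiW N m) := by
  induction m with
  | zero => rw [negLapIter, Function.iterate_zero, id_eq, gker_eq]
  | succ m ih =>
    rw [negLapIter, Function.iterate_succ_apply']
    rw [negLapIter] at ih
    rw [ih]
    funext x
    show -(lap N (Jint N (phiW N m)) x) = _
    rw [lap_Jint (phiW_cont N m) (integrable_phiW N m)
      (by simpa using integrable_pow_mul_phiW N m 1) (integrable_pow_mul_phiW N m 2) x, neg_neg]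
    have hw : (fun ξ : EuclideanSpace ℝ (Fin N) => ‖ξ‖ ^ 2 * phiW N m ξ) = phiW N (m + 1) := by
      funext ξ
      unfold phiW
      rw [show 2 * (m + 1) = 2 * m + 2 by ring, pow_add]
      ring
    rw [hw]

/-! ### Main theorem -/

theorem Gfund_series_expansion (N : ℕ) (hN : 1 ≤ N) (lam t : ℝ) (ht : 0 < t)
    (x : EuclideanSpace ℝ (Fin N)) :
    Gfund N lam t x =
      ((t ^ (-(N : ℝ) / 4) : ℝ) : ℂ) *
        ∑' m : ℕ, (((-lam) ^ m * t ^ ((m : ℝ) / 2) / m.factorial : ℝ) : ℂ) *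
          negLapIter N m (gker N) ((t ^ (-(1 : ℝ) / 4) : ℝ) • x) := by
  set R : ℝ := t ^ (-(1 : ℝ) / 4) with hRdef
  have hRpos : 0 < R := Real.rpow_pos_of_pos ht _
  set z : EuclideanSpace ℝ (Fin N) := R • x with hzdef
  set b : ℝ := lam * t ^ ((1 : ℝ) / 2) with hbdef
  set K : ℝ := (2 * Real.pi) ^ (-(N : ℝ)) with hKdef
  -- rpow arithmetic
  have hR4 : R ^ (4 : ℕ) * t = 1 := by
    rw [hRdef, ← Real.rpow_natCast (t ^ (-(1 : ℝ) / 4)) 4, ← Real.rpow_mul ht.le,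
      show (-(1 : ℝ) / 4 * ((4 : ℕ) : ℝ)) = -1 by norm_num,
      Real.rpow_neg_one, inv_mul_cancel₀ ht.ne']
  have hR2 : R ^ (2 : ℕ) * t = t ^ ((1 : ℝ) / 2) := by
    rw [hRdef, ← Real.rpow_natCast (t ^ (-(1 : ℝ) / 4)) 2, ← Real.rpow_mul ht.le,
      show (-(1 : ℝ) / 4 * ((2 : ℕ) : ℝ)) = -(1 / 2) by norm_num,
      show t ^ ((1 : ℝ) / 2) = t ^ (-(1 / 2 : ℝ) + 1) by norm_num,
      Real.rpow_add ht, Real.rpow_one]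
  have hRN : R ^ (N : ℕ) = t ^ (-(N : ℝ) / 4) := by
    rw [hRdef, ← Real.rpow_natCast (t ^ (-(1 : ℝ) / 4)) N, ← Real.rpow_mul ht.le]
    congr 1
    ring
  -- change of variables
  have hCV : (∫ ξ : EuclideanSpace ℝ (Fin N),
        Complex.exp (-(((‖ξ‖ ^ 4 + lam * ‖ξ‖ ^ 2) * t : ℝ) : ℂ)
          + Complex.I * ((inner ℝ x ξ : ℝ) : ℂ)))
      = (R ^ N : ℝ) • ∫ η : EuclideanSpace ℝ (Fin N),
          Complex.exp (-((‖η‖ ^ 4 + b * ‖η‖ ^ 2 : ℝ) : ℂ)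
            + Complex.I * ((inner ℝ z η : ℝ) : ℂ)) := by
    have h := MeasureTheory.Measure.integral_comp_smul
      (volume : Measure (EuclideanSpace ℝ (Fin N)))
      (fun ξ : EuclideanSpace ℝ (Fin N) =>
        Complex.exp (-(((‖ξ‖ ^ 4 + lam * ‖ξ‖ ^ 2) * t : ℝ) : ℂ)
          + Complex.I * ((inner ℝ x ξ : ℝ) : ℂ))) R
    rw [finrank_euclideanSpace_fin] at h
    have hpt : ∀ η : EuclideanSpace ℝ (Fin N),
        Complex.exp (-(((‖R • η‖ ^ 4 + lam * ‖R • η‖ ^ 2) * t : ℝ) : ℂ)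
          + Complex.I * ((inner ℝ x (R • η) : ℝ) : ℂ))
        = Complex.exp (-((‖η‖ ^ 4 + b * ‖η‖ ^ 2 : ℝ) : ℂ)
            + Complex.I * ((inner ℝ z η : ℝ) : ℂ)) := by
      intro η
      have hnorm : ‖R • η‖ = R * ‖η‖ := by
        rw [norm_smul, Real.norm_eq_abs, abs_of_pos hRpos]
      have h1 : (‖R • η‖ ^ 4 + lam * ‖R • η‖ ^ 2) * t = ‖η‖ ^ 4 + b * ‖η‖ ^ 2 := by
        rw [hnorm, mul_pow, mul_pow]
        linear_combination ‖η‖ ^ 4 * hR4 + lam * ‖η‖ ^ 2 * hR2 - ‖η‖ ^ 2 * hbdef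
      have h2 : (inner ℝ x (R • η) : ℝ) = inner ℝ z η := by
        rw [real_inner_smul_right, hzdef, real_inner_smul_left]
      rw [h1, h2]
    simp only [hpt] at h
    rw [h, abs_of_pos (by positivity : (0:ℝ) < (R ^ N)⁻¹), smul_smul,
      mul_inv_cancel₀ (by positivity : (R:ℝ) ^ N ≠ 0), one_smul]
  -- the summand functions
  set f : ℕ → EuclideanSpace ℝ (Fin N) → ℂ := fun m η =>
    (((-b) ^ m / m.factorial * (‖η‖ ^ (2 * m) * Real.exp (-‖η‖ ^ 4)) : ℝ) : ℂ) *
      Complex.exp (Complex.I * ((inner ℝ z η : ℝ) : ℂ)) with hfdef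
  have hwcont : ∀ m : ℕ, Continuous fun η : EuclideanSpace ℝ (Fin N) =>
      (-b) ^ m / m.factorial * (‖η‖ ^ (2 * m) * Real.exp (-‖η‖ ^ 4)) :=
    fun m => continuous_const.mul ((continuous_norm.pow _).mul
      (Real.continuous_exp.comp (continuous_norm.pow 4).neg))
  -- pointwise series expansion
  have hExp : ∀ η : EuclideanSpace ℝ (Fin N),
      Complex.exp (-((‖η‖ ^ 4 + b * ‖η‖ ^ 2 : ℝ) : ℂ) + Complex.I * ((inner ℝ z η : ℝ) : ℂ))
      = ∑' m : ℕ, f m η := by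
    intro η
    have h1 : ∀ m : ℕ, (-b) ^ m / m.factorial * (‖η‖ ^ (2 * m) * Real.exp (-‖η‖ ^ 4))
        = (-(b * ‖η‖ ^ 2)) ^ m / m.factorial * Real.exp (-‖η‖ ^ 4) := by
      intro m
      rw [show -(b * ‖η‖ ^ 2) = (-b) * ‖η‖ ^ 2 by ring, mul_pow, ← pow_mul]
      ring
    have hsum : (∑' m : ℕ, (-b) ^ m / m.factorial * (‖η‖ ^ (2 * m) * Real.exp (-‖η‖ ^ 4)))
        = Real.exp (-(b * ‖η‖ ^ 2)) * Real.exp (-‖η‖ ^ 4) := by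
      simp only [h1]
      rw [tsum_mul_right]
      congr 1
      simp only [Real.exp_eq_exp_ℝ, NormedSpace.exp_eq_tsum_div]
    calc Complex.exp (-((‖η‖ ^ 4 + b * ‖η‖ ^ 2 : ℝ) : ℂ) + Complex.I * ((inner ℝ z η : ℝ) : ℂ))
        = ((Real.exp (-(b * ‖η‖ ^ 2)) * Real.exp (-‖η‖ ^ 4) : ℝ) : ℂ) *
            Complex.exp (Complex.I * ((inner ℝ z η : ℝ) : ℂ)) := by
          rw [Complex.ofReal_mul, Complex.ofReal_exp, Complex.ofReal_exp, ← Complex.exp_add,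
            ← Complex.exp_add]
          congr 1
          push_cast
          ring
      _ = ((∑' m : ℕ, (-b) ^ m / m.factorial * (‖η‖ ^ (2 * m) * Real.exp (-‖η‖ ^ 4)) : ℝ) : ℂ) *
            Complex.exp (Complex.I * ((inner ℝ z η : ℝ) : ℂ)) := by rw [hsum]
      _ = ∑' m : ℕ, f m η := by
          rw [Complex.ofReal_tsum, tsum_mul_right]
  -- swapping sum and integral
  have hswap : ∫ η : EuclideanSpace ℝ (Fin N), ∑' m : ℕ, f m η
      = ∑' m : ℕ, ∫ η : EuclideanSpace ℝ (Fin N), f m η := by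
    refine integral_tsum (fun m => (cont_integrand (hwcont m) z).aestronglyMeasurable) ?_
    have hnn : ∀ (m : ℕ) (η : EuclideanSpace ℝ (Fin N)),
        ‖f m η‖ = |b| ^ m / m.factorial * (‖η‖ ^ (2 * m) * Real.exp (-‖η‖ ^ 4)) := by
      intro m η
      rw [hfdef]
      simp only
      rw [norm_mul, norm_cexp_I_mul_ofReal, mul_one, Complex.norm_real, Real.norm_eq_abs,
        abs_mul, abs_div, abs_pow, abs_neg, Nat.abs_cast,
        _root_.abs_of_nonneg (by positivity : (0:ℝ) ≤ ‖η‖ ^ (2 * m) * Real.exp (-‖η‖ ^ 4))]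
    have h1 : ∀ (m : ℕ) (η : EuclideanSpace ℝ (Fin N)),
        |b| ^ m / m.factorial * (‖η‖ ^ (2 * m) * Real.exp (-‖η‖ ^ 4))
        = (|b| * ‖η‖ ^ 2) ^ m / m.factorial * Real.exp (-‖η‖ ^ 4) := by
      intro m η
      rw [mul_pow, ← pow_mul]
      ring
    have hptl : ∀ η : EuclideanSpace ℝ (Fin N), (∑' m : ℕ, (‖f m η‖₊ : ENNReal))
        = ENNReal.ofReal (Real.exp (|b| * ‖η‖ ^ 2 - ‖η‖ ^ 4)) := by
      intro η
      have hsummable : Summable fun m : ℕ =>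
          |b| ^ m / m.factorial * (‖η‖ ^ (2 * m) * Real.exp (-‖η‖ ^ 4)) := by
        refine Summable.congr ((Real.summable_pow_div_factorial (|b| * ‖η‖ ^ 2)).mul_right
          (Real.exp (-‖η‖ ^ 4))) fun m => (h1 m η).symm
      have hco : ∀ m : ℕ, (‖f m η‖₊ : ENNReal)
          = ENNReal.ofReal (|b| ^ m / m.factorial * (‖η‖ ^ (2 * m) * Real.exp (-‖η‖ ^ 4))) := by
        intro m
        rw [← enorm_eq_nnnorm, ← ofReal_norm, hnn]
      rw [tsum_congr hco, ← ENNReal.ofReal_tsum_of_nonneg (fun m => by positivity) hsummable]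
      congr 1
      simp only [h1]
      rw [tsum_mul_right]
      rw [show |b| * ‖η‖ ^ 2 - ‖η‖ ^ 4 = |b| * ‖η‖ ^ 2 + -‖η‖ ^ 4 by ring, Real.exp_add]
      congr 1
      simp only [Real.exp_eq_exp_ℝ, NormedSpace.exp_eq_tsum_div]
    rw [← lintegral_tsum (fun m => (cont_integrand (hwcont m) z).measurable.enorm.aemeasurable)]
    refine ne_of_eq_of_ne (lintegral_congr hptl) ?_
    exact (integrable_exp_quad N |b|).lintegral_lt_top.ne
  -- evaluating each integral
  have hInt : ∀ m : ℕ, (∫ η : EuclideanSpace ℝ (Fin N), f m η)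
      = (((-b) ^ m / m.factorial : ℝ) : ℂ) *
          Jint N (fun η => ‖η‖ ^ (2 * m) * Real.exp (-‖η‖ ^ 4)) z := by
    intro m
    simp only [Jint, hfdef]
    rw [← integral_const_mul]
    refine integral_congr_ae (ae_of_all _ fun η => ?_)
    push_cast
    ring
  have hphiW : ∀ m : ℕ, Jint N (phiW N m) z
      = ((K : ℝ) : ℂ) * Jint N (fun η => ‖η‖ ^ (2 * m) * Real.exp (-‖η‖ ^ 4)) z := by
    intro m
    simp only [Jint, phiW, hKdef]
    rw [← integral_const_mul]
    refine integral_congr_ae (ae_of_all _ fun η => ?_)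
    push_cast
    ring
  have hcoef : ∀ m : ℕ, (((-b) ^ m / m.factorial : ℝ)) =
      (-lam) ^ m * t ^ ((m : ℝ) / 2) / m.factorial := by
    intro m
    rw [hbdef, show -(lam * t ^ ((1 : ℝ) / 2)) = (-lam) * t ^ ((1 : ℝ) / 2) by ring, mul_pow,
      ← Real.rpow_natCast (t ^ ((1 : ℝ) / 2)) m, ← Real.rpow_mul ht.le,
      show (1 : ℝ) / 2 * (m : ℝ) = (m : ℝ) / 2 by ring]
  -- assembly
  have hterm : ∀ m : ℕ, (((-lam) ^ m * t ^ ((m : ℝ) / 2) / m.factorial : ℝ) : ℂ) *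
      negLapIter N m (gker N) z
      = ((K : ℝ) : ℂ) * ((((-b) ^ m / m.factorial : ℝ) : ℂ) *
          Jint N (fun η => ‖η‖ ^ (2 * m) * Real.exp (-‖η‖ ^ 4)) z) := by
    intro m
    rw [negLapIter_gker N m, hphiW m, hcoef m]
    ring
  rw [tsum_congr hterm, tsum_mul_left]
  show ((K : ℝ) : ℂ) * _ = _
  rw [hCV, integral_congr_ae (ae_of_all _ fun η => hExp η), hswap, tsum_congr hInt, hRN]
  rw [Complex.real_smul]
  ring
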